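/- arXiv:2106.12725 — 3 statements merged into one kernel-verified Lean document; each statement's English description precedes it below -/
import Mathlib

section
/- Let j ∈ R and p = per(T[j..j+3τ−1)). Then: (1) if j+1 ∈ R, then per(T[j+1..j+3τ)) = p; and (2) rend(j) = j + p + LCE(j, j+p). -/
open scoped Classical

namespace CSA

/-- Character of a 1-indexed string at position `i` (junk value 0 out of range). -/
def idx (S : List ℕ) (i : ℕ) : ℕ := S.getD (i - 1) 0

/-- Substring `S[i..j)` in the 1-indexed, half-open convention. -/
def sub (S : List ℕ) (i j : ℕ) : List ℕ := (S.drop (i - 1)).take (j - i)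

/-- Suffix `S[i..|S|]` (1-indexed). -/
def suf (S : List ℕ) (i : ℕ) : List ℕ := S.drop (i - 1)

/-- Length of the longest common prefix of two strings. -/
def lcp (A B : List ℕ) : ℕ := ((A.zip B).takeWhile fun p => p.1 == p.2).length

/-- `LCE T j₁ j₂` is the length of the longest common prefix of `T[j₁..n]` and `T[j₂..n]`. -/
def LCE (T : List ℕ) (j₁ j₂ : ℕ) : ℕ := lcp (suf T j₁) (suf T j₂)

/-- `p` is a period of `S`. -/
def IsPeriod (S : List ℕ) (p : ℕ) : Prop :=
  1 ≤ p ∧ p ≤ S.length ∧ ∀ i, i + p < S.length → S.getD i 0 = S.getD (i + p) 0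

/-- The shortest period of `S`. -/
noncomputable def per (S : List ℕ) : ℕ := sInf {p | IsPeriod S p}

/-- `R = {i ∈ [1..n−3τ+2] : per(T[i..i+3τ−1)) ≤ τ/3}`. -/
noncomputable def R (T : List ℕ) (τ : ℕ) : Set ℕ :=
  {i | 1 ≤ i ∧ i + 3 * τ ≤ T.length + 2 ∧ 3 * per (sub T i (i + 3 * τ - 1)) ≤ τ}

/-- `rend(j) = min{j′ ≥ j : j′ ∉ R} + 3τ − 2`. -/
noncomputable def rend (T : List ℕ) (τ j : ℕ) : ℕ :=
  sInf {j' | j ≤ j' ∧ j' ∉ R T τ} + 3 * τ - 2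

/-- `L-root(j)`: lexicographically smallest among `{T[j+t..j+t+p) : 0 ≤ t < p}`
where `p = per(T[j..j+3τ−1))`. -/
noncomputable def Lroot (T : List ℕ) (τ j : ℕ) : List ℕ :=
  WithTop.untopD [] (((Finset.range (per (sub T j (j + 3 * τ - 1)))).image fun t =>
      sub T (j + t) (j + t + per (sub T j (j + 3 * τ - 1)))).min)

/-- `L-head(j)`: the (unique) `s ∈ [0..p)` with `T[j+s..j+s+p) = L-root(j)`. -/
noncomputable def Lhead (T : List ℕ) (τ j : ℕ) : ℕ :=
  sInf {s | s < per (sub T j (j + 3 * τ - 1)) ∧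
    sub T (j + s) (j + s + per (sub T j (j + 3 * τ - 1))) = Lroot T τ j}

noncomputable def Lexp (T : List ℕ) (τ j : ℕ) : ℕ :=
  (rend T τ j - j - Lhead T τ j) / per (sub T j (j + 3 * τ - 1))

noncomputable def Ltail (T : List ℕ) (τ j : ℕ) : ℕ :=
  (rend T τ j - j - Lhead T τ j) % per (sub T j (j + 3 * τ - 1))

noncomputable def rendfull (T : List ℕ) (τ j : ℕ) : ℕ := rend T τ j - Ltail T τ j

/-- `type(j) = +1` if `rend(j) ≤ n` and `T[rend(j)] > T[rend(j)−p]`, and `−1` otherwise. -/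
noncomputable def typ (T : List ℕ) (τ j : ℕ) : ℤ :=
  if rend T τ j ≤ T.length ∧
      idx T (rend T τ j - per (sub T j (j + 3 * τ - 1))) < idx T (rend T τ j)
    then 1 else -1

noncomputable def Rminus (T : List ℕ) (τ : ℕ) : Set ℕ := {j ∈ R T τ | typ T τ j = -1}

noncomputable def RH (T : List ℕ) (τ : ℕ) (H : List ℕ) : Set ℕ :=
  {j ∈ R T τ | Lroot T τ j = H}

noncomputable def RsH (T : List ℕ) (τ s : ℕ) (H : List ℕ) : Set ℕ :=
  {j ∈ R T τ | Lroot T τ j = H ∧ Lhead T τ j = s}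

noncomputable def RminusH (T : List ℕ) (τ : ℕ) (H : List ℕ) : Set ℕ :=
  Rminus T τ ∩ RH T τ H

noncomputable def RminusSH (T : List ℕ) (τ s : ℕ) (H : List ℕ) : Set ℕ :=
  Rminus T τ ∩ RsH T τ s H

noncomputable def Rprime (T : List ℕ) (τ : ℕ) : Set ℕ := {j ∈ R T τ | j - 1 ∉ R T τ}

/-- `Occ(P,S)`: the set of (1-indexed) starting positions of occurrences of `P` in `S`. -/
def OccSet (P S : List ℕ) : Set ℕ :=
  {j | 1 ≤ j ∧ j + P.length ≤ S.length + 1 ∧ sub S j (j + P.length) = P}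

noncomputable def RangeBeg (P T : List ℕ) : ℕ :=
  Set.ncard {i | 1 ≤ i ∧ i ≤ T.length ∧ suf T i < P}

noncomputable def RangeEnd (P T : List ℕ) : ℕ := RangeBeg P T + (OccSet P T).ncard

/-- `ISA[j]`: the lexicographic rank of the suffix `T[j..n]` among all suffixes of `T`. -/
noncomputable def ISA (T : List ℕ) (j : ℕ) : ℕ :=
  Set.ncard {j' | 1 ≤ j' ∧ j' ≤ T.length ∧ suf T j' ≤ suf T j}

/-- `succ_S(i) = min{j ∈ S ∪ {n−2τ+2} : j ≥ i}`. -/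
noncomputable def succS (T : List ℕ) (τ : ℕ) (Sync : Set ℕ) (i : ℕ) : ℕ :=
  sInf {j | i ≤ j ∧ (j ∈ Sync ∨ j = T.length + 2 - 2 * τ)}

/-- The set `D` of distinguishing prefixes. -/
noncomputable def Dset (T : List ℕ) (τ : ℕ) (Sync : Set ℕ) : Set (List ℕ) :=
  {X | ∃ i, 1 ≤ i ∧ i + 3 * τ ≤ T.length + 2 ∧ i ∉ R T τ ∧
    X = sub T i (succS T τ Sync i + 2 * τ)}

/-- `T^∞[i] = T[1 + ((i−1) mod n)]` for `i : ℤ`. -/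
def tinf (T : List ℕ) (i : ℤ) : ℕ := idx T (((i - 1).emod (T.length : ℤ)).toNat + 1)

/-- `W[i]`: the reverse of `T^∞[s^lex_i − τ .. s^lex_i + 2τ)`. -/
def Wstr (T : List ℕ) (τ : ℕ) (slex : ℕ → ℕ) (i : ℕ) : List ℕ :=
  ((List.range (3 * τ)).map fun k => tinf T ((slex i : ℤ) - (τ : ℤ) + (k : ℤ))).reverse

/- Pattern versions of the `L`-decomposition functions. -/

noncomputable def perP (τ : ℕ) (P : List ℕ) : ℕ := per (P.take (3 * τ - 1))

/-- A pattern is periodic if `|P| ≥ 3τ−1` and `per(P[1..3τ−1]) ≤ τ/3`. -/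
noncomputable def Periodic (τ : ℕ) (P : List ℕ) : Prop :=
  3 * τ - 1 ≤ P.length ∧ 3 * perP τ P ≤ τ

noncomputable def pend (τ : ℕ) (P : List ℕ) : ℕ :=
  1 + perP τ P + lcp P (P.drop (perP τ P))

noncomputable def LrootP (τ : ℕ) (P : List ℕ) : List ℕ :=
  WithTop.untopD [] (((Finset.range (perP τ P)).image fun t => (P.drop t).take (perP τ P)).min)

noncomputable def LheadP (τ : ℕ) (P : List ℕ) : ℕ :=
  sInf {s | s < perP τ P ∧ (P.drop s).take (perP τ P) = LrootP τ P}

noncomputable def LexpP (τ : ℕ) (P : List ℕ) : ℕ :=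
  (pend τ P - 1 - LheadP τ P) / perP τ P

noncomputable def LtailP (τ : ℕ) (P : List ℕ) : ℕ :=
  (pend τ P - 1 - LheadP τ P) % perP τ P

noncomputable def pendfullP (τ : ℕ) (P : List ℕ) : ℕ := pend τ P - LtailP τ P

noncomputable def typP (τ : ℕ) (P : List ℕ) : ℤ :=
  if pend τ P ≤ P.length ∧ idx P (pend τ P - perP τ P) < idx P (pend τ P)
    then 1 else -1

/-- `pow(H)`: the prefix of length `|H|·⌈τ/|H|⌉` of `H^∞`. -/
def powS (τ : ℕ) (H : List ℕ) : List ℕ :=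
  (List.replicate ((τ + H.length - 1) / H.length) H).flatten

lemma suf_length (T : List ℕ) (i : ℕ) : (suf T i).length = T.length - (i-1) := by
  simp [suf]

lemma suf_getD (T : List ℕ) {i : ℕ} (hi : 1 ≤ i) (t : ℕ) :
    (suf T i).getD t 0 = idx T (i + t) := by
  simp only [suf, idx, List.getD_eq_getElem?_getD, List.getElem?_drop]
  congr 2
  omega

lemma sub_length (T : List ℕ) {i k : ℕ} (hi : 1 ≤ i) (hk : k ≤ T.length + 1) :
    (sub T i k).length = k - i := by
  simp only [sub, List.length_take, List.length_drop]
  omega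

lemma sub_getD (T : List ℕ) {i k t : ℕ} (hi : 1 ≤ i) (ht : t < k - i) :
    (sub T i k).getD t 0 = idx T (i + t) := by
  simp only [sub, idx, List.getD_eq_getElem?_getD, List.getElem?_take, ht, if_true,
    List.getElem?_drop]
  congr 2
  omega

/-- Period condition expressed on `idx T` over the interval `[i,k)`. -/
def PerOn (T : List ℕ) (i k q : ℕ) : Prop :=
  1 ≤ q ∧ q ≤ k - i ∧ ∀ t, i ≤ t → t + q < k → idx T t = idx T (t + q)

lemma isPeriod_sub_iff {T : List ℕ} {i k q : ℕ} (hi : 1 ≤ i) (hk : k ≤ T.length + 1) :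
    IsPeriod (sub T i k) q ↔ PerOn T i k q := by
  unfold IsPeriod PerOn
  rw [sub_length T hi hk]
  constructor
  · rintro ⟨h1, h2, h3⟩
    refine ⟨h1, h2, fun t ht htk => ?_⟩
    have h4 := h3 (t - i) (by omega)
    rwa [sub_getD T hi (by omega), sub_getD T hi (by omega),
      show i + (t - i) = t by omega, show i + (t - i + q) = t + q by omega] at h4
  · rintro ⟨h1, h2, h3⟩
    refine ⟨h1, h2, fun u hu => ?_⟩
    have h4 := h3 (i + u) (by omega) (by omega)
    rwa [sub_getD T hi (by omega), sub_getD T hi (by omega),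
      show i + (u + q) = i + u + q by omega]

lemma perOn_per_sub {T : List ℕ} {i k : ℕ} (hi : 1 ≤ i) (hk : k ≤ T.length + 1)
    (hik : i < k) : PerOn T i k (per (sub T i k)) := by
  rw [← isPeriod_sub_iff hi hk]
  have hne : (k - i) ∈ {p | IsPeriod (sub T i k) p} :=
    (isPeriod_sub_iff hi hk).2 ⟨by omega, by omega, fun t ht htk => by omega⟩
  exact Nat.sInf_mem ⟨k - i, hne⟩

lemma per_sub_le {T : List ℕ} {i k q : ℕ} (hi : 1 ≤ i) (hk : k ≤ T.length + 1)
    (h : PerOn T i k q) : per (sub T i k) ≤ q :=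
  Nat.sInf_le ((isPeriod_sub_iff hi hk).2 h)

lemma PerOn.mono {T : List ℕ} {i k i' k' q : ℕ} (h : PerOn T i k q)
    (hi : i ≤ i') (hk : k' ≤ k) (hq : q ≤ k' - i') : PerOn T i' k' q :=
  ⟨h.1, hq, fun t ht htk => h.2.2 t (by omega) (by omega)⟩

lemma PerOn.iterate {T : List ℕ} {i k q : ℕ} (h : PerOn T i k q) :
    ∀ d t, i ≤ t → t + d * q < k → idx T t = idx T (t + d * q) := by
  intro d
  induction d with
  | zero => simp
  | succ d ih =>
    intro t ht htk
    have h1 : 1 ≤ q := h.1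
    have := ih t ht (by nlinarith)
    rw [this]
    have := h.2.2 (t + d * q) (by omega) (by nlinarith [Nat.succ_mul d q])
    rw [this]
    ring_nf

lemma PerOn.eq_of_dvd {T : List ℕ} {i k g a b : ℕ} (h : PerOn T i k g)
    (ha : i ≤ a) (hb : i ≤ b) (ha' : a < k) (hb' : b < k)
    (hdvd : a ≤ b ∧ g ∣ b - a ∨ b ≤ a ∧ g ∣ a - b) : idx T a = idx T b := by
  rcases hdvd with ⟨hab, d, hd⟩ | ⟨hab, d, hd⟩ <;> rw [Nat.mul_comm] at hd
  · have := h.iterate d a ha (by omega)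
    rw [this, show a + d * g = b by omega]
  · have := h.iterate d b hb (by omega)
    rw [this, show b + d * g = a by omega]

/-- Fine–Wilf (weak form): two periods `p, q` with `p + q ≤ k − i` have `gcd p q` as period. -/
lemma fineWilf {T : List ℕ} : ∀ N {i k p q : ℕ}, p + q ≤ N →
    PerOn T i k p → PerOn T i k q → p + q ≤ k - i → PerOn T i k (Nat.gcd p q) := by
  intro N
  induction N using Nat.strong_induction_on with
  | _ N ih =>
    intro i k p q hN hp hq hlen
    have h1p := hp.1
    have h1q := hq.1
    have hik : i + (p + q) ≤ k := by
      have := hq.2.1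
      have := hp.2.1
      omega
    rcases lt_trichotomy p q with hlt | heq | hlt
    · -- p < q : replace q by q - p
      have hsub : PerOn T i k (q - p) := by
        refine ⟨by omega, by omega, fun t ht htk => ?_⟩
        by_cases hc : t + q < k
        · have e2 := hp.2.2 (t + (q - p)) (by omega) (by omega)
          rw [hq.2.2 t ht hc, e2]
          congr 1; omega
        · have e1 := hp.2.2 (t - p) (by omega) (by omega)
          have e2 := hq.2.2 (t - p) (by omega) (by omega)
          have e3 : idx T t = idx T (t - p) := by rw [e1]; congr 1; omega
          rw [e3, e2]; congr 1; omega
      have := ih (N - p) (by omega) (show p + (q - p) ≤ N - p by omega) hp hsub (by omega)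
      rwa [Nat.gcd_sub_self_right (by omega)] at this
    · subst heq
      simpa using hp
    · -- q < p : replace p by p - q
      have hsub : PerOn T i k (p - q) := by
        refine ⟨by omega, by omega, fun t ht htk => ?_⟩
        by_cases hc : t + p < k
        · have e2 := hq.2.2 (t + (p - q)) (by omega) (by omega)
          rw [hp.2.2 t ht hc, e2]
          congr 1; omega
        · have e1 := hq.2.2 (t - q) (by omega) (by omega)
          have e2 := hp.2.2 (t - q) (by omega) (by omega)
          have e3 : idx T t = idx T (t - q) := by rw [e1]; congr 1; omega
          rw [e3, e2]; congr 1; omega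
      have := ih (N - q) (by omega) (show (p - q) + q ≤ N - q by omega) hsub hq (by omega)
      rwa [Nat.gcd_comm (p - q) q, Nat.gcd_sub_self_right (by omega), Nat.gcd_comm] at this

lemma lcp_nil_left (B : List ℕ) : lcp [] B = 0 := by simp [lcp]

lemma lcp_nil_right (A : List ℕ) : lcp A [] = 0 := by simp [lcp]

lemma lcp_cons (a b : ℕ) (A B : List ℕ) :
    lcp (a :: A) (b :: B) = if a = b then lcp A B + 1 else 0 := by
  simp only [lcp, List.zip_cons_cons, List.takeWhile_cons]
  by_cases h : a = b <;> simp [h]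

lemma lcp_le_left : ∀ (A B : List ℕ), lcp A B ≤ A.length
  | [], B => by simp [lcp_nil_left]
  | a :: A, [] => by simp [lcp_nil_right]
  | a :: A, b :: B => by
    rw [lcp_cons]
    split
    · simpa using lcp_le_left A B
    · simp

lemma lcp_le_right : ∀ (A B : List ℕ), lcp A B ≤ B.length
  | [], B => by simp [lcp_nil_left]
  | a :: A, [] => by simp [lcp_nil_right]
  | a :: A, b :: B => by
    rw [lcp_cons]
    split
    · simpa using lcp_le_right A B
    · simp

lemma lcp_getD_eq : ∀ (A B : List ℕ) (t : ℕ), t < lcp A B → A.getD t 0 = B.getD t 0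
  | [], B, t => by simp [lcp_nil_left]
  | a :: A, [], t => by simp [lcp_nil_right]
  | a :: A, b :: B, t => by
    rw [lcp_cons]
    split
    · rename_i h
      intro ht
      match t with
      | 0 => simpa using h
      | t + 1 =>
        simp only [List.getD_cons_succ]
        exact lcp_getD_eq A B t (by omega)
    · omega

lemma lcp_getD_ne : ∀ (A B : List ℕ), lcp A B < A.length → lcp A B < B.length →
    A.getD (lcp A B) 0 ≠ B.getD (lcp A B) 0
  | [], B => by simp [lcp_nil_left]
  | a :: A, [] => by simp [lcp_nil_right]
  | a :: A, b :: B => by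
    rw [lcp_cons]
    split
    · rename_i h
      intro h1 h2
      simp only [List.getD_cons_succ]
      exact lcp_getD_ne A B (by simpa using h1) (by simpa using h2)
    · rename_i h
      intro _ _
      simpa using h

lemma le_lcp : ∀ (A B : List ℕ) (m : ℕ), m ≤ A.length → m ≤ B.length →
    (∀ t, t < m → A.getD t 0 = B.getD t 0) → m ≤ lcp A B
  | _, _, 0, _, _, _ => Nat.zero_le _
  | a :: A, b :: B, m + 1, h1, h2, h3 => by
    rw [lcp_cons]
    have hab : a = b := by simpa using h3 0 (by omega)
    rw [if_pos hab]
    have := le_lcp A B m (by simpa using h1) (by simpa using h2)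
      (fun t ht => by simpa using h3 (t + 1) (by omega))
    omega

/-- Lemma: run end. Let `j ∈ R` and `p = per(T[j..j+3τ−1))`. Then:
(1) if `j+1 ∈ R`, then `per(T[j+1..j+3τ)) = p`; and (2) `rend(j) = j + p + LCE(j, j+p)`. -/
theorem statement_0
    (σ n τ : ℕ) (T : List ℕ)
    (hσ : 2 ≤ σ) (hn : 2 ≤ n) (hτ : 1 ≤ τ)
    (hlen : T.length = n) (halph : ∀ c ∈ T, c < σ)
    (hlast : idx T n = 0) (huniq : ∀ i, 1 ≤ i → i < n → idx T i ≠ 0)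
    (j : ℕ) (hj : j ∈ R T τ)
    (p : ℕ) (hp : p = per (sub T j (j + 3 * τ - 1))) :
    (j + 1 ∈ R T τ → per (sub T (j + 1) (j + 3 * τ)) = p) ∧
    rend T τ j = j + p + LCE T j (j + p) := by
  subst hlen
  obtain ⟨hj1, hj2, hj3⟩ := hj
  rw [← hp] at hj3
  have hk1 : j + 3 * τ - 1 ≤ T.length + 1 := by omega
  have hpP : PerOn T j (j + 3 * τ - 1) p := hp ▸ perOn_per_sub hj1 hk1 (by omega)
  have hp1 : 1 ≤ p := hpP.1
  set ℓ := LCE T j (j + p) with hldef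
  have hlcp : ℓ = lcp (suf T j) (suf T (j + p)) := rfl
  -- common prefix facts
  have hF1 : ∀ t, t < ℓ → idx T (j + t) = idx T (j + p + t) := by
    intro t ht
    have := lcp_getD_eq (suf T j) (suf T (j + p)) t (hlcp ▸ ht)
    rwa [suf_getD T hj1, suf_getD T (by omega)] at this
  have hF2 : ℓ ≤ T.length + 1 - (j + p) := by
    have := lcp_le_right (suf T j) (suf T (j + p))
    rw [suf_length] at this
    omega
  have hF0 : 3 * τ - 1 - p ≤ ℓ := by
    rw [hlcp]
    apply le_lcp
    · rw [suf_length]; omega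
    · rw [suf_length]; omega
    · intro t ht
      rw [suf_getD T hj1, suf_getD T (by omega),
        show j + p + t = j + t + p from by omega]
      exact hpP.2.2 (j + t) (by omega) (by omega)
  -- strict bound (mismatch exists before end of string)
  have hlt : ℓ < T.length + 1 - (j + p) := by
    rcases Nat.lt_or_ge ℓ (T.length + 1 - (j + p)) with h | h
    · exact h
    · exfalso
      have he : ℓ = T.length + 1 - (j + p) := by omega
      have h0 := hF1 (T.length - (j + p)) (by omega)
      rw [show j + p + (T.length - (j + p)) = T.length from by omega] at h0
      rw [hlast] at h0
      exact huniq (j + (T.length - (j + p))) (by omega) (by omega) h0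
  have hmis : idx T (j + ℓ) ≠ idx T (j + p + ℓ) := by
    have := lcp_getD_ne (suf T j) (suf T (j + p))
      (by rw [suf_length]; omega) (by rw [suf_length]; omega)
    rw [suf_getD T hj1, suf_getD T (by omega), ← hlcp] at this
    exact this
  -- the run
  have hrun : PerOn T j (j + p + ℓ) p := by
    refine ⟨hp1, by omega, fun t ht htk => ?_⟩
    have := hF1 (t - j) (by omega)
    rwa [show j + (t - j) = t from by omega,
      show j + p + (t - j) = t + p from by omega] at this
  have hmdef : j + p + ℓ + 2 - 3 * τ + 3 * τ = j + p + ℓ + 2 := by omega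
  set m := j + p + ℓ + 2 - 3 * τ with hm
  have hmj : j + 1 ≤ m := by omega
  -- Claim A
  have hA : ∀ j', j ≤ j' → j' < m → j' ∈ R T τ := by
    intro j' h1 h2
    refine ⟨by omega, by omega, ?_⟩
    have hq : PerOn T j' (j' + 3 * τ - 1) p := hrun.mono (by omega) (by omega) (by omega)
    have := per_sub_le (show 1 ≤ j' by omega) (by omega) hq
    omega
  -- Claim B
  have hB : m ∉ R T τ := by
    rintro ⟨hm1, hm2, hm3⟩
    set q := per (sub T m (m + 3 * τ - 1)) with hqdef
    have hqP : PerOn T m (m + 3 * τ - 1) q := perOn_per_sub (by omega) (by omega) (by omega)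
    have hq1 : 1 ≤ q := hqP.1
    have hov_p : PerOn T m (j + p + ℓ) p := hrun.mono (by omega) (by omega) (by omega)
    have hov_q : PerOn T m (j + p + ℓ) q := hqP.mono le_rfl (by omega) (by omega)
    have hg : PerOn T m (j + p + ℓ) (Nat.gcd p q) :=
      fineWilf (p + q) le_rfl hov_p hov_q (by omega)
    have e1 : idx T (j + p + ℓ - q) = idx T (j + p + ℓ) := by
      have := hqP.2.2 (j + p + ℓ - q) (by omega) (by omega)
      rw [this]
      congr 1
      omega
    have e2 : idx T (j + ℓ) = idx T (j + p + ℓ - q) := by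
      apply hg.eq_of_dvd (by omega) (by omega) (by omega) (by omega)
      rcases le_total q p with h | h
      · left
        refine ⟨by omega, ?_⟩
        rw [show j + p + ℓ - q - (j + ℓ) = p - q from by omega]
        exact Nat.dvd_sub (Nat.gcd_dvd_left p q) (Nat.gcd_dvd_right p q)
      · right
        refine ⟨by omega, ?_⟩
        rw [show j + ℓ - (j + p + ℓ - q) = q - p from by omega]
        exact Nat.dvd_sub (Nat.gcd_dvd_right p q) (Nat.gcd_dvd_left p q)
    exact hmis (by rw [e2, e1])
  -- rend computation
  have hmem : m ∈ {j' | j ≤ j' ∧ j' ∉ R T τ} := ⟨by omega, hB⟩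
  have hinf : sInf {j' | j ≤ j' ∧ j' ∉ R T τ} = m := by
    refine le_antisymm (Nat.sInf_le hmem) (le_csInf ⟨m, hmem⟩ ?_)
    rintro x ⟨hx1, hx2⟩
    by_contra hx
    exact hx2 (hA x hx1 (by omega))
  constructor
  · -- Part (1)
    rintro ⟨h11, h12, h13⟩
    rw [show j + 1 + 3 * τ - 1 = j + 3 * τ from by omega] at h13
    set q := per (sub T (j + 1) (j + 3 * τ)) with hqdef
    have hq'P : PerOn T (j + 1) (j + 3 * τ) q := perOn_per_sub (by omega) (by omega) (by omega)
    have hq1 : 1 ≤ q := hq'P.1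
    have hOp : PerOn T (j + 1) (j + 3 * τ - 1) p := hpP.mono (by omega) le_rfl (by omega)
    have hOq : PerOn T (j + 1) (j + 3 * τ - 1) q := hq'P.mono le_rfl (by omega) (by omega)
    have hg : PerOn T (j + 1) (j + 3 * τ - 1) (Nat.gcd p q) :=
      fineWilf (p + q) le_rfl hOp hOq (by omega)
    have hdvd : ∀ a b : ℕ, j + 1 ≤ a → a < j + 3 * τ - 1 → j + 1 ≤ b → b < j + 3 * τ - 1 →
        (a + q = b + p ∨ a + p = b + q) → idx T a = idx T b := by
      intro a b ha1 ha2 hb1 hb2 hab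
      apply hg.eq_of_dvd ha1 hb1 ha2 hb2
      rcases le_total a b with h | h
      · left
        refine ⟨h, ?_⟩
        rcases hab with h' | h'
        · rw [show b - a = q - p from by omega]
          exact Nat.dvd_sub (Nat.gcd_dvd_right p q) (Nat.gcd_dvd_left p q)
        · rw [show b - a = p - q from by omega]
          exact Nat.dvd_sub (Nat.gcd_dvd_left p q) (Nat.gcd_dvd_right p q)
      · right
        refine ⟨h, ?_⟩
        rcases hab with h' | h'
        · rw [show a - b = p - q from by omega]
          exact Nat.dvd_sub (Nat.gcd_dvd_left p q) (Nat.gcd_dvd_right p q)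
        · rw [show a - b = q - p from by omega]
          exact Nat.dvd_sub (Nat.gcd_dvd_right p q) (Nat.gcd_dvd_left p q)
    have hPp : PerOn T (j + 1) (j + 3 * τ) p := by
      refine ⟨hp1, by omega, fun t ht htk => ?_⟩
      by_cases hc : t + p < j + 3 * τ - 1
      · exact hpP.2.2 t (by omega) hc
      · have e1 : idx T (j + 3 * τ - 1 - q) = idx T (j + 3 * τ - 1) := by
          have := hq'P.2.2 (j + 3 * τ - 1 - q) (by omega) (by omega)
          rw [this]
          congr 1
          omega
        have e2 : idx T (j + 3 * τ - 1 - p) = idx T (j + 3 * τ - 1 - q) :=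
          hdvd _ _ (by omega) (by omega) (by omega) (by omega) (by right; omega)
        have e0 : t = j + 3 * τ - 1 - p := by omega
        rw [e0, e2, e1]
        congr 1
        omega
    have hle1 : q ≤ p := per_sub_le (by omega) (by omega) hPp
    have hPq : PerOn T j (j + 3 * τ - 1) q := by
      refine ⟨hq1, by omega, fun t ht htk => ?_⟩
      by_cases hc : j + 1 ≤ t
      · exact hOq.2.2 t hc htk
      · have hteq : t = j := by omega
        have e1 : idx T j = idx T (j + p) := hpP.2.2 j le_rfl (by omega)
        have e2 : idx T (j + p) = idx T (j + q) :=
          hdvd _ _ (by omega) (by omega) (by omega) (by omega) (by left; omega)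
        rw [hteq, e1, e2]
    have hle2 : p ≤ q := by
      rw [hp]
      exact per_sub_le hj1 hk1 hPq
    omega
  · rw [rend, hinf]
    omega
end CSA
end

section
/- Let j, j′, j′′ ∈ [1..n] be such that j, j′′ ∈ R, j′ ∉ R, and j < j′ < j′′. Then rend(j) ≤ j′′ + τ − 1 and j′′ − j ≥ 2τ. -/
open scoped Classical

namespace CSA

lemma getD_sub_aux (T : List ℕ) (i m k : ℕ) (hk : k < m) (h2 : i - 1 + k < T.length) :
    (sub T i (i + m)).getD k 0 = T.getD (i - 1 + k) 0 := by
  have hm : i + m - i = m := by omega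
  simp only [sub, hm, List.getD_eq_getElem?_getD, List.getElem?_take, hk, if_pos,
    List.getElem?_drop]

lemma length_sub_aux (T : List ℕ) (i m : ℕ) (h : i - 1 + m ≤ T.length) :
    (sub T i (i + m)).length = m := by
  simp [sub]; omega

lemma per_isPeriod (S : List ℕ) (h : 1 ≤ S.length) : IsPeriod S (per S) := by
  have hmem : IsPeriod S S.length := ⟨h, le_rfl, fun i hi => absurd hi (by omega)⟩
  exact Nat.sInf_mem (⟨S.length, hmem⟩ : Set.Nonempty {p | IsPeriod S p})

lemma windowP (T : List ℕ) (τ i : ℕ) (hτ : 1 ≤ τ) (hi : i ∈ R T τ) :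
    1 ≤ per (sub T i (i + 3 * τ - 1)) ∧ 3 * per (sub T i (i + 3 * τ - 1)) ≤ τ ∧
    ∀ k, k + per (sub T i (i + 3 * τ - 1)) < 3 * τ - 1 →
      T.getD (i - 1 + k) 0 = T.getD (i - 1 + k + per (sub T i (i + 3 * τ - 1))) 0 := by
  obtain ⟨hi1, hi2, hi3⟩ := hi
  have he : i + 3 * τ - 1 = i + (3 * τ - 1) := by omega
  rw [he] at hi3 ⊢
  have hlen : (sub T i (i + (3 * τ - 1))).length = 3 * τ - 1 :=
    length_sub_aux T i (3 * τ - 1) (by omega)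
  have hP := per_isPeriod (sub T i (i + (3 * τ - 1))) (by omega)
  obtain ⟨hp1, hp2, hp3⟩ := hP
  refine ⟨hp1, hi3, fun k hk => ?_⟩
  have h1 := hp3 k (by omega)
  rw [getD_sub_aux T i (3 * τ - 1) k (by omega) (by omega),
    getD_sub_aux T i (3 * τ - 1) (k + per (sub T i (i + (3 * τ - 1)))) (by omega) (by omega)]
      at h1
  have : i - 1 + (k + per (sub T i (i + (3 * τ - 1)))) =
      i - 1 + k + per (sub T i (i + (3 * τ - 1))) := by omega
  rwa [this] at h1

lemma key_lemma (T : List ℕ) (τ a b c : ℕ) (hτ : 1 ≤ τ)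
    (ha : a ∈ R T τ) (hc : c ∈ R T τ) (hab : a < b) (hbc : b < c)
    (hlt : c < a + 2 * τ) : b ∈ R T τ := by
  obtain ⟨ha1, ha2, ha3⟩ := ha
  obtain ⟨hc1, hc2, hc3⟩ := hc
  set p := per (sub T a (a + 3 * τ - 1)) with hp
  set q := per (sub T c (c + 3 * τ - 1)) with hq
  obtain ⟨hp1, hp2, Pa⟩ := windowP T τ a hτ ⟨ha1, ha2, ha3⟩
  obtain ⟨hq1, hq2, Pc⟩ := windowP T τ c hτ ⟨hc1, hc2, hc3⟩
  rw [← hp] at hp1 hp2 Pa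
  rw [← hq] at hq1 hq2 Pc
  have main : ∀ i, a - 1 ≤ i → i + p < c - 1 + (3 * τ - 1) →
      T.getD i 0 = T.getD (i + p) 0 := by
    intro i
    induction i using Nat.strong_induction_on with
    | _ i IH =>
      intro hai hip
      by_cases hcase : i + p < a - 1 + (3 * τ - 1)
      · have h1 := Pa (i - (a - 1)) (by omega)
        have e1 : a - 1 + (i - (a - 1)) = i := by omega
        rwa [e1] at h1
      · have hiq : c - 1 + q ≤ i := by omega
        have h1 := Pc (i - q - (c - 1)) (by omega)
        have e1 : c - 1 + (i - q - (c - 1)) = i - q := by omega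
        have e2 : i - q + q = i := by omega
        rw [e1, e2] at h1
        have h2 := Pc (i + p - q - (c - 1)) (by omega)
        have e3 : c - 1 + (i + p - q - (c - 1)) = i + p - q := by omega
        have e4 : i + p - q + q = i + p := by omega
        rw [e3, e4] at h2
        have h3 := IH (i - q) (by omega) (by omega) (by omega)
        have e5 : i - q + p = i + p - q := by omega
        rw [e5] at h3
        rw [← h1, h3, h2]
  refine ⟨by omega, by omega, ?_⟩
  have he : b + 3 * τ - 1 = b + (3 * τ - 1) := by omega
  rw [he]
  have hlenb : (sub T b (b + (3 * τ - 1))).length = 3 * τ - 1 :=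
    length_sub_aux T b (3 * τ - 1) (by omega)
  have hPb : IsPeriod (sub T b (b + (3 * τ - 1))) p := by
    refine ⟨hp1, by omega, fun k hk => ?_⟩
    rw [hlenb] at hk
    rw [getD_sub_aux T b (3 * τ - 1) k (by omega) (by omega),
      getD_sub_aux T b (3 * τ - 1) (k + p) (by omega) (by omega)]
    have e : b - 1 + (k + p) = (b - 1 + k) + p := by omega
    rw [e]
    exact main (b - 1 + k) (by omega) (by omega)
  have hle : per (sub T b (b + (3 * τ - 1))) ≤ p := Nat.sInf_le hPb
  omega

/-- Lemma: gap between runs. -/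
theorem statement_3
    (σ n τ : ℕ) (T : List ℕ)
    (hσ : 2 ≤ σ) (hn : 2 ≤ n) (hτ : 1 ≤ τ)
    (hlen : T.length = n) (halph : ∀ c ∈ T, c < σ)
    (hlast : idx T n = 0) (huniq : ∀ i, 1 ≤ i → i < n → idx T i ≠ 0)
    (j j' j'' : ℕ)
    (hjr : 1 ≤ j) (hjn : j ≤ n) (hj'r : 1 ≤ j') (hj'n : j' ≤ n)
    (hj''r : 1 ≤ j'') (hj''n : j'' ≤ n)
    (hj : j ∈ R T τ) (hj'' : j'' ∈ R T τ) (hj' : j' ∉ R T τ)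
    (h1 : j < j') (h2 : j' < j'') :
    rend T τ j ≤ j'' + τ - 1 ∧ 2 * τ ≤ j'' - j := by
  have hgap : j + 2 * τ ≤ j'' := by
    by_contra hcon
    exact hj' (key_lemma T τ j j' j'' hτ hj hj'' h1 h2 (by omega))
  set S := {x | j ≤ x ∧ x ∉ R T τ} with hS
  have hne : S.Nonempty := ⟨j', ⟨h1.le, hj'⟩⟩
  have hmem := Nat.sInf_mem hne
  set m := sInf S with hm
  obtain ⟨hjm, hmR⟩ := hmem
  have hmj : j < m := by
    rcases eq_or_lt_of_le hjm with h | h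
    · exact absurd (h ▸ hj) hmR
    · exact h
  have hmj' : m ≤ j' := Nat.sInf_le ⟨h1.le, hj'⟩
  have hm1 : m - 1 ∈ R T τ := by
    by_contra hcon
    have : m - 1 ∈ S := ⟨by omega, hcon⟩
    have := Nat.sInf_le this
    omega
  have hgap2 : m - 1 + 2 * τ ≤ j'' := by
    by_contra hcon
    exact hmR (key_lemma T τ (m - 1) m j'' hτ hm1 hj'' (by omega) (by omega) (by omega))
  constructor
  · show sInf S + 3 * τ - 2 ≤ j'' + τ - 1
    omega
  · omega
end CSA
end

section
/- Let P be a string of length m ≥ 3τ−1 over {0,…,σ−1} with 3·per(P[1..3τ−1]) > τ (i.e., P is nonperiodic), and let X ∈ D be a prefix of P. Denote δ_text = |X| − 2τ and let P′ = P[δ_text+1..m] be the suffix of P obtained by removing its first δ_text characters. Let b_pre = |{i ∈ [1..n′] : T[s^lex_i..n] ≺ P′}| and e_pre = b_pre + |{i ∈ [1..n′] : P′ is a prefix of T[s^lex_i..n]}|. Then RangeBeg(P,T) = b_X + δ₁ and RangeEnd(P,T) = b_X + δ₂, where b_X = RangeBeg(X,T), δ₁ = |{i ∈ [1..b_pre]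 : the reverse of X is a prefix of W[i]}|, and δ₂ = |{i ∈ [1..e_pre] : the reverse of X is a prefix of W[i]}|. -/
open scoped Classical

namespace CSA

lemma not_append_lt_self (C t : List ℕ) : ¬ (C ++ t) < C := by
  induction C with
  | nil =>
    intro h
    exact List.not_lt_nil t h
  | cons a C ih =>
    intro h
    have h' : List.Lex (·<·) (a :: (C ++ t)) (a :: C) := h
    cases h' with
    | cons h2 => exact ih h2
    | rel h2 => exact lt_irrefl _ h2

lemma prefix_le {X A : List ℕ} (h : X <+: A) : X ≤ A := by
  obtain ⟨t, rfl⟩ := h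
  exact not_lt.mp (not_append_lt_self X t)

lemma not_lt_of_prefix {X A : List ℕ} (h : X <+: A) : ¬ A < X :=
  not_lt.mpr (prefix_le h)

lemma append_lt_append_iff (C A B : List ℕ) : C ++ A < C ++ B ↔ A < B := by
  constructor
  · intro h
    induction C with
    | nil => simpa using h
    | cons a C ih =>
      have h' : List.Lex (·<·) (a :: (C ++ A)) (a :: (C ++ B)) := h
      cases h' with
      | cons h2 => exact ih h2
      | rel h2 => exact absurd h2 (lt_irrefl a)
  · intro h
    exact List.Lex.append_left (·<·) h C

lemma lex3 {X B : List ℕ} (A : List ℕ) (hXB : X <+: B) (h1 : ¬ A < X) (h2 : ¬ X <+: A) :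
    B < A := by
  induction X generalizing A B with
  | nil => exact absurd (List.nil_prefix) h2
  | cons x X ih =>
    cases A with
    | nil => exact absurd (List.nil_lt_cons x X) h1
    | cons a A =>
      obtain ⟨t, rfl⟩ := hXB
      rcases lt_trichotomy a x with hax | hax | hax
      · exact absurd (List.Lex.rel hax) h1
      · subst hax
        have h1' : ¬ A < X := fun hc => h1 (List.Lex.cons hc)
        have h2' : ¬ X <+: A := fun hc => h2 (List.cons_prefix_cons.mpr ⟨rfl, hc⟩)
        exact List.Lex.cons (ih A (List.prefix_append X t) h1' h2')
      · exact List.Lex.rel hax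

lemma lt_of_lt_of_prefix {A B P : List ℕ} (h : A < B) (hp : P <+: B) :
    A < P ∨ P <+: A := by
  by_contra hc
  rw [not_or] at hc
  exact lt_asymm h (lex3 A hp hc.1 hc.2)

lemma prefix_iff_getD {A B : List ℕ} (h : A.length ≤ B.length) :
    A <+: B ↔ ∀ k, k < A.length → A.getD k 0 = B.getD k 0 := by
  constructor
  · intro hp k hk
    rw [List.getD_eq_getElem _ _ hk, List.getD_eq_getElem _ _ (lt_of_lt_of_le hk h)]
    exact hp.getElem hk
  · intro hpt
    rw [List.prefix_iff_eq_take]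
    apply List.ext_getElem
    · simp [Nat.min_eq_left h]
    · intro n h1 h2
      have h2' : n < B.length := lt_of_lt_of_le h1 h
      rw [List.getElem_take]
      have := hpt n h1
      rwa [List.getD_eq_getElem _ _ h1, List.getD_eq_getElem _ _ h2'] at this

lemma drop_eq_iff_getD {M A : List ℕ} {d : ℕ} (h : M.length = d + A.length) :
    M.drop d = A ↔ ∀ k, k < A.length → M.getD (d + k) 0 = A.getD k 0 := by
  constructor
  · intro he k hk
    subst he
    have h1 : d + k < M.length := by simp [List.length_drop] at hk; omega
    have h2 : k < (M.drop d).length := hk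
    rw [List.getD_eq_getElem _ _ h1, List.getD_eq_getElem _ _ h2,
      List.getElem_drop]
  · intro hpt
    apply List.ext_getElem
    · simp; omega
    · intro k h1 h2
      have h3 : d + k < M.length := by simp at h1; omega
      have h4 := hpt k h2
      rw [List.getD_eq_getElem _ _ h3, List.getD_eq_getElem _ _ h2] at h4
      rw [List.getElem_drop]
      exact h4

lemma initseg (n' : ℕ) (Q : ℕ → Prop)
    (hdc : ∀ i j, 1 ≤ i → i ≤ j → j ≤ n' → Q j → Q i) :
    {i | 1 ≤ i ∧ i ≤ n' ∧ Q i} = Set.Icc 1 {i | 1 ≤ i ∧ i ≤ n' ∧ Q i}.ncard := by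
  set S := {i | 1 ≤ i ∧ i ≤ n' ∧ Q i} with hS
  have hsub : S ⊆ Set.Icc 1 n' := fun x hx => ⟨hx.1, hx.2.1⟩
  have hfin : S.Finite := (Set.finite_Icc 1 n').subset hsub
  rcases Set.eq_empty_or_nonempty S with he | hne
  · rw [he]; simp
  · have hbdd : BddAbove S := hfin.bddAbove
    set m := sSup S with hm
    have hmS : m ∈ S := Nat.sSup_mem hne hbdd
    have hSeq : S = Set.Icc 1 m := by
      apply Set.eq_of_subset_of_subset
      · intro x hx; exact ⟨hx.1, le_csSup hbdd hx⟩
      · intro x hx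
        exact ⟨hx.1, le_trans hx.2 hmS.2.1, hdc x m hx.1 hx.2 hmS.2.1 hmS.2.2⟩
    have hcard : S.ncard = m := by
      rw [hSeq, ← Finset.coe_Icc, Set.ncard_coe_finset, Nat.card_Icc]
      omega
    rw [hcard, hSeq]

lemma icc_ncard (a b : ℕ) : (Set.Icc a b).ncard = b + 1 - a := by
  rw [← Finset.coe_Icc, Set.ncard_coe_finset, Nat.card_Icc]


/-- Lemma: pattern matching for nonperiodic patterns. -/
theorem statement_9
    (σ n τ : ℕ) (T : List ℕ)
    (hσ : 2 ≤ σ) (hn : 2 ≤ n) (hτ : 1 ≤ τ)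
    (hlen : T.length = n) (halph : ∀ c ∈ T, c < σ)
    (hlast : idx T n = 0) (huniq : ∀ i, 1 ≤ i → i < n → idx T i ≠ 0)
    (Sync : Set ℕ)
    (hSyncRange : ∀ i ∈ Sync, 1 ≤ i ∧ i + 2 * τ ≤ n + 1)
    (hCons : ∀ i j : ℕ, 1 ≤ i → i + 2 * τ ≤ n + 1 → 1 ≤ j → j + 2 * τ ≤ n + 1 →
      sub T i (i + 2 * τ) = sub T j (j + 2 * τ) → (i ∈ Sync ↔ j ∈ Sync))
    (hDens : ∀ i : ℕ, 1 ≤ i → i + 3 * τ ≤ n + 2 →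
      (Sync ∩ Set.Ico i (i + τ) = ∅ ↔ i ∈ R T τ))
    (n' : ℕ) (hn' : Sync.ncard = n')
    (slex : ℕ → ℕ)
    (hslexMem : ∀ i, 1 ≤ i → i ≤ n' → slex i ∈ Sync)
    (hslexSurj : ∀ x ∈ Sync, ∃ i, 1 ≤ i ∧ i ≤ n' ∧ slex i = x)
    (hslexSorted : ∀ i i', 1 ≤ i → i < i' → i' ≤ n' → suf T (slex i) < suf T (slex i'))
    (P : List ℕ) (m : ℕ) (hm : P.length = m) (halphP : ∀ c ∈ P, c < σ)
    (hm3 : 3 * τ - 1 ≤ m) (hnonper : τ < 3 * perP τ P)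
    (X : List ℕ) (hX : X ∈ Dset T τ Sync) (hXpref : X <+: P)
    (bpre epre : ℕ)
    (hbpre : bpre = Set.ncard {i | 1 ≤ i ∧ i ≤ n' ∧
      suf T (slex i) < P.drop (X.length - 2 * τ)})
    (hepre : epre = bpre + Set.ncard {i | 1 ≤ i ∧ i ≤ n' ∧
      P.drop (X.length - 2 * τ) <+: suf T (slex i)}) :
    RangeBeg P T = RangeBeg X T +
      Set.ncard {i | 1 ≤ i ∧ i ≤ bpre ∧ X.reverse <+: Wstr T τ slex i} ∧
    RangeEnd P T = RangeBeg X T +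
      Set.ncard {i | 1 ≤ i ∧ i ≤ epre ∧ X.reverse <+: Wstr T τ slex i} := by
  classical
  -- unpack X ∈ D
  obtain ⟨i0, hi01, hi0n, hi0R, hXdef⟩ := hX
  rw [hlen] at hi0n
  -- a synchronizing position in [i0, i0+τ)
  have hne : (Sync ∩ Set.Ico i0 (i0 + τ)).Nonempty := by
    rw [Set.nonempty_iff_ne_empty]
    exact fun h => hi0R ((hDens i0 hi01 (by omega)).mp h)
  obtain ⟨s', hs'S, hs'I⟩ := hne
  rw [Set.mem_Ico] at hs'I
  obtain ⟨hs'lo, hs'hi⟩ := hs'I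
  have hs'r := hSyncRange s' hs'S
  -- the successor q = succS T τ Sync i0
  set q := succS T τ Sync i0 with hqdef
  have hmem : s' ∈ {j | i0 ≤ j ∧ (j ∈ Sync ∨ j = T.length + 2 - 2 * τ)} :=
    ⟨hs'lo, Or.inl hs'S⟩
  have hqmem : i0 ≤ q ∧ (q ∈ Sync ∨ q = T.length + 2 - 2 * τ) := by
    rw [hqdef]; unfold succS
    exact Nat.sInf_mem ⟨s', hmem⟩
  have hqle : q ≤ s' := by
    rw [hqdef]; unfold succS
    exact Nat.sInf_le hmem
  have hqS : q ∈ Sync := by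
    rcases hqmem.2 with h | h
    · exact h
    · exfalso; rw [hlen] at h
      have := hSyncRange s' hs'S
      omega
  have hqr := hSyncRange q hqS
  have hiq : i0 ≤ q := hqmem.1
  have hqlt : q < i0 + τ := lt_of_le_of_lt hqle hs'hi
  have hq2 : q + 2 * τ ≤ n + 1 := hqr.2
  -- length and characters of X
  have hXlen : X.length = (q - i0) + 2 * τ := by
    have : X.length = min (q + 2 * τ - i0) (T.length - (i0 - 1)) := by
      rw [hXdef]; simp [sub]
    rw [hlen] at this; omega
  have hδq : X.length - 2 * τ = q - i0 := by omega
  have hXget : ∀ k, k < X.length → X.getD k 0 = idx T (i0 + k) := by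
    intro k hk
    rw [hXdef] at hk ⊢
    unfold sub at hk ⊢
    unfold idx
    have hik : i0 + k - 1 = i0 - 1 + k := by omega
    rw [hik]
    have h2 : k < ((T.drop (i0 - 1)).take (q + 2 * τ - i0)).length := hk
    have hkT : i0 - 1 + k < T.length := by
      simp only [List.length_take, List.length_drop, hlen] at h2 ⊢
      omega
    rw [List.getD_eq_getElem _ _ h2, List.getD_eq_getElem _ _ hkT,
      List.getElem_take, List.getElem_drop]
  have hXne0 : ∀ k, k + 1 < X.length → X.getD k 0 ≠ 0 := by
    intro k hk
    rw [hXget k (by omega)]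
    exact huniq (i0 + k) (by omega) (by omega)
  -- length of an occurrence
  have hofl : ∀ j, 1 ≤ j → X <+: suf T j → j + X.length ≤ n + 1 := by
    intro j hj h
    have := h.length_le
    simp only [suf, List.length_drop, hlen] at this
    omega
  -- occurrence of X transfers a synchronizing position
  have hK3 : ∀ j, 1 ≤ j → X <+: suf T j → j + (q - i0) ∈ Sync := by
    intro j hj h
    have hjlen := hofl j hj h
    have e2 : X.drop (q - i0) = sub T q (q + 2 * τ) := by
      rw [hXdef]
      unfold sub
      rw [List.drop_take, List.drop_drop]
      have h1 : q + 2 * τ - i0 - (q - i0) = q + 2 * τ - q := by omega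
      have h2 : i0 - 1 + (q - i0) = q - 1 := by omega
      rw [h1, h2]
    have e1 : X.drop (q - i0) = sub T (j + (q - i0)) (j + (q - i0) + 2 * τ) := by
      have hx : X = (suf T j).take X.length := List.prefix_iff_eq_take.mp h
      conv_lhs => rw [hx]
      unfold sub suf
      rw [List.drop_take, List.drop_drop]
      have h1 : X.length - (q - i0) = j + (q - i0) + 2 * τ - (j + (q - i0)) := by omega
      have h2 : j - 1 + (q - i0) = j + (q - i0) - 1 := by omega
      rw [h1, h2]
    exact (hCons (j + (q - i0)) q (by omega) (by omega) hqr.1 (by omega)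
      (e1.symm.trans e2)).mpr hqS
  -- the window lemma
  have htinfv : ∀ v : ℕ, 1 ≤ v → v ≤ n → tinf T (v : ℤ) = idx T v := by
    intro v h1 h2
    unfold tinf
    congr 1
    have he : ((v : ℤ) - 1).emod (T.length : ℤ) = (v : ℤ) - 1 := by
      rw [hlen]
      exact Int.emod_eq_of_lt (by omega) (by omega)
    rw [he]
    omega
  have htinf0 : tinf T (0 : ℤ) = 0 := by
    unfold tinf
    have h2 : ((T.length : ℤ) - 1).emod (T.length : ℤ) = (T.length : ℤ) - 1 :=
      Int.emod_eq_of_lt (by omega) (by omega)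
    have h3 : ((T.length : ℤ) - 1).emod (T.length : ℤ) = (-1 : ℤ).emod (T.length : ℤ) := by
      have h5 := Int.add_mul_emod_self_left (a := (-1 : ℤ)) (b := (T.length : ℤ)) (c := 1)
      have heq : (-1 : ℤ) + (T.length : ℤ) * 1 = (T.length : ℤ) - 1 := by ring
      rw [heq] at h5
      exact h5
    have h4 : ((0 : ℤ) - 1).emod (T.length : ℤ) = (T.length : ℤ) - 1 := by
      rw [show (0 : ℤ) - 1 = (-1 : ℤ) by ring, ← h3]
      exact h2
    rw [h4, show ((T.length : ℤ) - 1).toNat + 1 = n by omega]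
    exact hlast
  have hWnorm : ∀ i, Wstr T τ slex i =
      ((List.range (3 * τ)).map fun k : ℕ =>
        tinf T ((slex i : ℤ) - (τ : ℤ) + (k : ℤ))).reverse := by
    intro i
    unfold Wstr
    congr 1
    induction (List.range (3 * τ)) with
    | nil => rfl
    | cons a l ih => simp_all
  have hWlem : ∀ i, slex i ∈ Sync →
      (X.reverse <+: Wstr T τ slex i ↔
        ((q - i0) + 1 ≤ slex i ∧ X <+: suf T (slex i - (q - i0)))) := by
    intro i hiS
    have hsr := hSyncRange _ hiS
    rw [hWnorm i, List.reverse_prefix]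
    set M := (List.range (3 * τ)).map
      (fun k : ℕ => tinf T ((slex i : ℤ) - (τ : ℤ) + (k : ℤ))) with hMdef
    have hMlen : M.length = 3 * τ := by simp [hMdef]
    have hXle : X.length ≤ 3 * τ := by omega
    have hMget : ∀ m, m < 3 * τ → M.getD m 0 = tinf T ((slex i : ℤ) - (τ : ℤ) + (m : ℤ)) := by
      intro m hm
      have h1 : m < M.length := by omega
      rw [List.getD_eq_getElem _ _ h1]
      simp only [hMdef, List.getElem_map, List.getElem_range]
    have hsuf : X <:+ M ↔ M.drop (3 * τ - X.length) = X := by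
      rw [List.suffix_iff_eq_drop, hMlen, eq_comm]
    rw [hsuf, drop_eq_iff_getD (by omega)]
    by_cases hcase : (q - i0) + 1 ≤ slex i
    · have hkey : ∀ k, k < X.length →
          M.getD (3 * τ - X.length + k) 0 = tinf T ((slex i - (q - i0) + k : ℕ) : ℤ) := by
        intro k hk
        rw [hMget _ (by omega)]
        congr 1
        push_cast
        omega
      have htv : ∀ k, k < X.length →
          tinf T ((slex i - (q - i0) + k : ℕ) : ℤ) = idx T (slex i - (q - i0) + k) := by
        intro k hk
        exact htinfv _ (by omega) (by omega)
      have hsuflen : X.length ≤ (suf T (slex i - (q - i0))).length := by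
        simp only [suf, List.length_drop, hlen]
        omega
      have hsufget : ∀ k, k < X.length →
          (suf T (slex i - (q - i0))).getD k 0 = idx T (slex i - (q - i0) + k) := by
        intro k hk
        unfold suf idx
        have h1 : k < (T.drop (slex i - (q - i0) - 1)).length := by
          simp only [List.length_drop, hlen]
          omega
        have h2 : slex i - (q - i0) - 1 + k < T.length := by rw [hlen]; omega
        have hik : slex i - (q - i0) + k - 1 = slex i - (q - i0) - 1 + k := by omega
        rw [List.getD_eq_getElem _ _ h1, hik, List.getD_eq_getElem _ _ h2,
          List.getElem_drop]
      constructor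
      · intro hall
        refine ⟨hcase, ?_⟩
        rw [prefix_iff_getD hsuflen]
        intro k hk
        rw [hsufget k hk, ← htv k hk, ← hkey k hk]
        exact (hall k hk).symm
      · rintro ⟨-, hp⟩
        intro k hk
        rw [hkey k hk, htv k hk, ← hsufget k hk]
        exact ((prefix_iff_getD hsuflen).mp hp k hk).symm
    · constructor
      · intro hall
        exfalso
        have hk : (q - i0) - slex i < X.length := by omega
        have h0 : M.getD (3 * τ - X.length + ((q - i0) - slex i)) 0 = tinf T (0 : ℤ) := by
          rw [hMget _ (by omega)]
          congr 1
          push_cast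
          omega
        have h5 := hall _ hk
        rw [h0, htinf0] at h5
        exact hXne0 _ (by omega) h5.symm
      · rintro ⟨hc, -⟩
        exact absurd hc hcase
  -- decomposition of a suffix starting with X
  have hK5 : ∀ j, 1 ≤ j → X <+: suf T j →
      suf T j = P.take (q - i0) ++ suf T (j + (q - i0)) := by
    intro j hj h
    have h1 : (suf T j).take (q - i0) = P.take (q - i0) := by
      obtain ⟨t, ht⟩ := h
      obtain ⟨u, hu⟩ := hXpref
      rw [← ht, ← hu, List.take_append, List.take_append]
      have hz : q - i0 - X.length = 0 := by omega
      rw [hz]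
      simp
    have h2 : (suf T j).drop (q - i0) = suf T (j + (q - i0)) := by
      unfold suf
      rw [List.drop_drop]
      congr 1
      omega
    rw [← h1, ← h2, List.take_append_drop]
  have hPsplit : P = P.take (q - i0) ++ P.drop (X.length - 2 * τ) := by
    rw [hδq, List.take_append_drop]
  have hord : ∀ j, 1 ≤ j → X <+: suf T j →
      (suf T j < P ↔ suf T (j + (q - i0)) < P.drop (X.length - 2 * τ)) := by
    intro j hj h
    have h2 := append_lt_append_iff (P.take (q - i0)) (suf T (j + (q - i0)))
      (P.drop (X.length - 2 * τ))
    rw [← hPsplit, ← hK5 j hj h] at h2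
    exact h2
  have hpre2 : ∀ j, 1 ≤ j → X <+: suf T j →
      (P <+: suf T j ↔ P.drop (X.length - 2 * τ) <+: suf T (j + (q - i0))) := by
    intro j hj h
    have h2 := List.prefix_append_right_inj (l₁ := P.drop (X.length - 2 * τ))
      (l₂ := suf T (j + (q - i0))) (P.take (q - i0))
    rw [← hPsplit, ← hK5 j hj h] at h2
    exact h2
  -- injectivity of rank ↦ text position on window-matching ranks
  have hinjW : ∀ i i', 1 ≤ i → i ≤ n' → 1 ≤ i' → i' ≤ n' →
      X.reverse <+: Wstr T τ slex i → X.reverse <+: Wstr T τ slex i' →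
      slex i - (q - i0) = slex i' - (q - i0) → i = i' := by
    intro i i' h1 h2 h3 h4 hw hw' he
    have hs1 := ((hWlem i (hslexMem i h1 h2)).mp hw).1
    have hs2 := ((hWlem i' (hslexMem i' h3 h4)).mp hw').1
    have hee : slex i = slex i' := by omega
    rcases lt_trichotomy i i' with hlt | h | hlt
    · have hcontra := hslexSorted i i' h1 hlt h4
      rw [hee] at hcontra
      exact absurd hcontra (lt_irrefl _)
    · exact h
    · have hcontra := hslexSorted i' i h3 hlt h2
      rw [hee] at hcontra
      exact absurd hcontra (lt_irrefl _)
  have himg1 : {j | 1 ≤ j ∧ X <+: suf T j ∧ suf T j < P} =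
      (fun i => slex i - (q - i0)) ''
        {i | (1 ≤ i ∧ i ≤ n' ∧ suf T (slex i) < P.drop (X.length - 2 * τ)) ∧
          X.reverse <+: Wstr T τ slex i} := by
    ext j
    simp only [Set.mem_image, Set.mem_setOf_eq]
    constructor
    · rintro ⟨hj1, hjX, hjP⟩
      have hsy := hK3 j hj1 hjX
      obtain ⟨i, hi1, hin, hie⟩ := hslexSurj _ hsy
      refine ⟨i, ⟨⟨hi1, hin, ?_⟩, ?_⟩, by rw [hie]; omega⟩
      · rw [hie]
        exact (hord j hj1 hjX).mp hjP
      · rw [hWlem i (by rw [hie]; exact hsy), hie]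
        exact ⟨by omega, by rw [show j + (q - i0) - (q - i0) = j by omega]; exact hjX⟩
    · rintro ⟨i, ⟨⟨hi1, hin, hilt⟩, hiW⟩, rfl⟩
      have hsy : slex i ∈ Sync := hslexMem i hi1 hin
      obtain ⟨hds, hocc⟩ := (hWlem i hsy).mp hiW
      refine ⟨by omega, hocc, ?_⟩
      refine (hord _ (by omega) hocc).mpr ?_
      rw [show slex i - (q - i0) + (q - i0) = slex i by omega]
      exact hilt
  have himg2 : {j | 1 ≤ j ∧ P <+: suf T j} =
      (fun i => slex i - (q - i0)) ''
        {i | (1 ≤ i ∧ i ≤ n' ∧ P.drop (X.length - 2 * τ) <+: suf T (slex i)) ∧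
          X.reverse <+: Wstr T τ slex i} := by
    ext j
    simp only [Set.mem_image, Set.mem_setOf_eq]
    constructor
    · rintro ⟨hj1, hjP⟩
      have hjX : X <+: suf T j := hXpref.trans hjP
      have hsy := hK3 j hj1 hjX
      obtain ⟨i, hi1, hin, hie⟩ := hslexSurj _ hsy
      refine ⟨i, ⟨⟨hi1, hin, ?_⟩, ?_⟩, by rw [hie]; omega⟩
      · rw [hie]
        exact (hpre2 j hj1 hjX).mp hjP
      · rw [hWlem i (by rw [hie]; exact hsy), hie]
        exact ⟨by omega, by rw [show j + (q - i0) - (q - i0) = j by omega]; exact hjX⟩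
    · rintro ⟨i, ⟨⟨hi1, hin, hipre⟩, hiW⟩, rfl⟩
      have hsy : slex i ∈ Sync := hslexMem i hi1 hin
      obtain ⟨hds, hocc⟩ := (hWlem i hsy).mp hiW
      refine ⟨by omega, ?_⟩
      refine (hpre2 _ (by omega) hocc).mpr ?_
      rw [show slex i - (q - i0) + (q - i0) = slex i by omega]
      exact hipre
  have hfinIcc : ∀ (k : ℕ) (S : Set ℕ), S ⊆ Set.Icc 1 k → S.Finite :=
    fun k S hS => (Set.finite_Icc 1 k).subset hS
  have hSb : {i | 1 ≤ i ∧ i ≤ n' ∧ suf T (slex i) < P.drop (X.length - 2 * τ)} =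
      Set.Icc 1 bpre := by
    rw [hbpre]
    exact initseg n' _ (fun i j h1 hij hj hQ => by
      rcases eq_or_lt_of_le hij with h | h
      · rwa [h]
      · exact lt_trans (hslexSorted i j h1 h hj) hQ)
  have hdisjQ : Disjoint
      {i | 1 ≤ i ∧ i ≤ n' ∧ suf T (slex i) < P.drop (X.length - 2 * τ)}
      {i | 1 ≤ i ∧ i ≤ n' ∧ P.drop (X.length - 2 * τ) <+: suf T (slex i)} := by
    rw [Set.disjoint_left]
    rintro a ⟨h1, h2, h3⟩ ⟨h1', h2', h3'⟩
    exact not_lt_of_prefix h3' h3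
  have hSe : {i | 1 ≤ i ∧ i ≤ n' ∧ (suf T (slex i) < P.drop (X.length - 2 * τ) ∨
      P.drop (X.length - 2 * τ) <+: suf T (slex i))} = Set.Icc 1 epre := by
    have hcard : {i | 1 ≤ i ∧ i ≤ n' ∧ (suf T (slex i) < P.drop (X.length - 2 * τ) ∨
        P.drop (X.length - 2 * τ) <+: suf T (slex i))}.ncard = epre := by
      have hsplit : {i | 1 ≤ i ∧ i ≤ n' ∧ (suf T (slex i) < P.drop (X.length - 2 * τ) ∨
          P.drop (X.length - 2 * τ) <+: suf T (slex i))} =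
          {i | 1 ≤ i ∧ i ≤ n' ∧ suf T (slex i) < P.drop (X.length - 2 * τ)} ∪
          {i | 1 ≤ i ∧ i ≤ n' ∧ P.drop (X.length - 2 * τ) <+: suf T (slex i)} := by
        ext a
        simp only [Set.mem_setOf_eq, Set.mem_union]
        tauto
      rw [hsplit, Set.ncard_union_eq hdisjQ
        (hfinIcc n' _ (fun a ha => ⟨ha.1, ha.2.1⟩))
        (hfinIcc n' _ (fun a ha => ⟨ha.1, ha.2.1⟩)), hepre, hbpre]
    rw [← hcard]
    exact initseg n' _ (fun i j h1 hij hj hQ => by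
      rcases eq_or_lt_of_le hij with h | h
      · rwa [h]
      · rcases hQ with hQ | hQ
        · exact Or.inl (lt_trans (hslexSorted i j h1 h hj) hQ)
        · rcases lt_of_lt_of_prefix (hslexSorted i j h1 h hj) hQ with h' | h'
          · exact Or.inl h'
          · exact Or.inr h')
  have hB1 : {i | 1 ≤ i ∧ i ≤ bpre ∧ X.reverse <+: Wstr T τ slex i} =
      {i | (1 ≤ i ∧ i ≤ n' ∧ suf T (slex i) < P.drop (X.length - 2 * τ)) ∧
        X.reverse <+: Wstr T τ slex i} := by
    ext a
    simp only [Set.mem_setOf_eq]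
    constructor
    · rintro ⟨h1, h2, h3⟩
      have hmem2 : a ∈ Set.Icc 1 bpre := ⟨h1, h2⟩
      rw [← hSb] at hmem2
      exact ⟨hmem2, h3⟩
    · rintro ⟨hq', h3⟩
      have hmem2 : a ∈ Set.Icc 1 bpre := by rw [← hSb]; exact hq'
      exact ⟨hmem2.1, hmem2.2, h3⟩
  have hB2 : {i | 1 ≤ i ∧ i ≤ epre ∧ X.reverse <+: Wstr T τ slex i} =
      {i | (1 ≤ i ∧ i ≤ n' ∧ suf T (slex i) < P.drop (X.length - 2 * τ)) ∧
        X.reverse <+: Wstr T τ slex i} ∪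
      {i | (1 ≤ i ∧ i ≤ n' ∧ P.drop (X.length - 2 * τ) <+: suf T (slex i)) ∧
        X.reverse <+: Wstr T τ slex i} := by
    ext a
    simp only [Set.mem_setOf_eq, Set.mem_union]
    constructor
    · rintro ⟨h1, h2, h3⟩
      have hmem2 : a ∈ Set.Icc 1 epre := ⟨h1, h2⟩
      rw [← hSe] at hmem2
      rcases hmem2.2.2 with h | h
      · exact Or.inl ⟨⟨hmem2.1, hmem2.2.1, h⟩, h3⟩
      · exact Or.inr ⟨⟨hmem2.1, hmem2.2.1, h⟩, h3⟩
    · intro hcase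
      have hmem2 : a ∈ Set.Icc 1 epre := by
        rw [← hSe]
        rcases hcase with ⟨⟨h1, h2, h3⟩, -⟩ | ⟨⟨h1, h2, h3⟩, -⟩
        · exact ⟨h1, h2, Or.inl h3⟩
        · exact ⟨h1, h2, Or.inr h3⟩
      rcases hcase with ⟨-, h3⟩ | ⟨-, h3⟩ <;> exact ⟨hmem2.1, hmem2.2, h3⟩
  have hcA : {j | 1 ≤ j ∧ X <+: suf T j ∧ suf T j < P}.ncard =
      {i | (1 ≤ i ∧ i ≤ n' ∧ suf T (slex i) < P.drop (X.length - 2 * τ)) ∧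
        X.reverse <+: Wstr T τ slex i}.ncard := by
    rw [himg1]
    exact Set.ncard_image_of_injOn (fun a ha b hb hab =>
      hinjW a b ha.1.1 ha.1.2.1 hb.1.1 hb.1.2.1 ha.2 hb.2 hab)
  have hcE : {j | 1 ≤ j ∧ P <+: suf T j}.ncard =
      {i | (1 ≤ i ∧ i ≤ n' ∧ P.drop (X.length - 2 * τ) <+: suf T (slex i)) ∧
        X.reverse <+: Wstr T τ slex i}.ncard := by
    rw [himg2]
    exact Set.ncard_image_of_injOn (fun a ha b hb hab =>
      hinjW a b ha.1.1 ha.1.2.1 hb.1.1 hb.1.2.1 ha.2 hb.2 hab)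
  have hRB : RangeBeg P T = RangeBeg X T +
      {j | 1 ≤ j ∧ X <+: suf T j ∧ suf T j < P}.ncard := by
    unfold RangeBeg
    have hsplit : {i | 1 ≤ i ∧ i ≤ T.length ∧ suf T i < P} =
        {i | 1 ≤ i ∧ i ≤ T.length ∧ suf T i < X} ∪
        {j | 1 ≤ j ∧ X <+: suf T j ∧ suf T j < P} := by
      ext j
      simp only [Set.mem_setOf_eq, Set.mem_union]
      constructor
      · rintro ⟨h1, h2, h3⟩
        by_cases h4 : suf T j < X
        · exact Or.inl ⟨h1, h2, h4⟩
        · by_cases h5 : X <+: suf T j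
          · exact Or.inr ⟨h1, h5, h3⟩
          · exact absurd h3 (lt_asymm (lex3 _ hXpref h4 h5))
      · rintro (⟨h1, h2, h3⟩ | ⟨h1, h2, h3⟩)
        · exact ⟨h1, h2, lt_of_lt_of_le h3 (prefix_le hXpref)⟩
        · refine ⟨h1, ?_, h3⟩
          have h6 := hofl j h1 h2
          omega
    have hdisj : Disjoint {i | 1 ≤ i ∧ i ≤ T.length ∧ suf T i < X}
        {j | 1 ≤ j ∧ X <+: suf T j ∧ suf T j < P} := by
      rw [Set.disjoint_left]
      rintro a ⟨h1, h2, h3⟩ ⟨h1', h2', h3'⟩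
      exact not_lt_of_prefix h2' h3
    rw [hsplit, Set.ncard_union_eq hdisj
      (hfinIcc T.length _ (fun a ha => ⟨ha.1, ha.2.1⟩))
      (hfinIcc T.length _ (fun a ha => ⟨ha.1, by
        have h6 := hofl a ha.1 ha.2.1; omega⟩))]
  have hOccE : OccSet P T = {j | 1 ≤ j ∧ P <+: suf T j} := by
    ext j
    unfold OccSet
    simp only [Set.mem_setOf_eq]
    constructor
    · rintro ⟨h1, h2, h3⟩
      refine ⟨h1, ?_⟩
      have h4 : sub T j (j + P.length) = (suf T j).take P.length := by
        unfold sub suf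
        rw [show j + P.length - j = P.length by omega]
      rw [List.prefix_iff_eq_take, ← h4]
      exact h3.symm
    · rintro ⟨h1, h2⟩
      have hl := h2.length_le
      simp only [suf, List.length_drop] at hl
      refine ⟨h1, by omega, ?_⟩
      have h4 : sub T j (j + P.length) = (suf T j).take P.length := by
        unfold sub suf
        rw [show j + P.length - j = P.length by omega]
      rw [h4]
      exact (List.prefix_iff_eq_take.mp h2).symm
  have hdisjC : Disjoint
      {i | (1 ≤ i ∧ i ≤ n' ∧ suf T (slex i) < P.drop (X.length - 2 * τ)) ∧
        X.reverse <+: Wstr T τ slex i}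
      {i | (1 ≤ i ∧ i ≤ n' ∧ P.drop (X.length - 2 * τ) <+: suf T (slex i)) ∧
        X.reverse <+: Wstr T τ slex i} := by
    rw [Set.disjoint_left]
    rintro a ⟨⟨h1, h2, h3⟩, -⟩ ⟨⟨h1', h2', h3'⟩, -⟩
    exact not_lt_of_prefix h3' h3
  have hRE : RangeEnd P T = RangeBeg P T + {j | 1 ≤ j ∧ P <+: suf T j}.ncard := by
    unfold RangeEnd
    rw [hOccE]
  constructor
  · rw [hRB, hcA, hB1]
  · rw [hB2, Set.ncard_union_eq hdisjC
      (hfinIcc n' _ (fun a ha => ⟨ha.1.1, ha.1.2.1⟩))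
      (hfinIcc n' _ (fun a ha => ⟨ha.1.1, ha.1.2.1⟩)),
      hRE, hRB, hcA, hcE]
    ring
end CSA
end
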